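/- arXiv:1012.5103 — 2 statements merged into one kernel-verified Lean document; each statement's English description precedes it below -/
import Mathlib

section
/- Let H be a Hilbert space, (P_h) a family of orthogonal finite-rank projections with P_h x → x as h → 0⁺ for every x ∈ H, A a bounded self-adjoint operator on H, and A_h := P_h A P_h restricted to range(P_h). If ‖A_h⁻¹‖ ≤ M for all sufficiently small h (with the convention ‖B⁻¹‖ = ∞ when B is not invertible), then ‖x‖ ≤ M‖Ax‖ and ‖x‖ ≤ M‖A*x‖ for all x ∈ H, and consequently A is invertible. -/
open Filter Topology ContinuousLinearMap

/-- Stability implies invertibility: if the compressions `A_h = P_h A P_h` of a bounded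
self-adjoint operator `A` to the ranges of orthogonal finite-rank projections `P_h → 1`
(strongly, as `h → 0⁺`) have inverses uniformly bounded by `M`, then
`‖x‖ ≤ M‖Ax‖` and `‖x‖ ≤ M‖A*x‖` for all `x`, and `A` is invertible. -/
theorem stability_implies_invertible
    {H : Type*} [NormedAddCommGroup H] [InnerProductSpace ℂ H] [CompleteSpace H]
    (P : ℝ → H →L[ℂ] H)
    (hproj : ∀ h : ℝ, 0 < h → IsIdempotentElem (P h) ∧ adjoint (P h) = P h ∧
      FiniteDimensional ℂ (LinearMap.range (P h : H →ₗ[ℂ] H)))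
    (hstrong : ∀ x : H, Tendsto (fun h : ℝ => P h x) (𝓝[>] (0 : ℝ)) (𝓝 x))
    (A : H →L[ℂ] H) (hA : IsSelfAdjoint A)
    (M : ℝ)
    (hstable : ∃ h₀ : ℝ, 0 < h₀ ∧ ∀ h ∈ Set.Ioc (0 : ℝ) h₀, ∀ x : H,
      ‖P h x‖ ≤ M * ‖P h (A (P h x))‖) :
    (∀ x : H, ‖x‖ ≤ M * ‖A x‖ ∧ ‖x‖ ≤ M * ‖adjoint A x‖) ∧ IsUnit A := by
  obtain ⟨h₀, hh₀, hst⟩ := hstable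
  -- orthogonal projections are contractions
  have hPle : ∀ h : ℝ, 0 < h → ∀ y : H, ‖P h y‖ ≤ ‖y‖ := by
    intro h hh y
    obtain ⟨hid, hadj, -⟩ := hproj h hh
    have hPP : P h (P h y) = P h y := by
      have := congrArg (fun T : H →L[ℂ] H => T y) hid
      simpa using this
    have key : ‖P h y‖ ^ 2 = RCLike.re (inner ℂ (y) (P h y) : ℂ) := by
      rw [← inner_self_eq_norm_sq (𝕜 := ℂ)]
      congr 1
      nth_rewrite 1 [show P h y = adjoint (P h) y by rw [hadj]]
      rw [ContinuousLinearMap.adjoint_inner_left, hPP]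
    have hre : RCLike.re (inner ℂ (y) (P h y) : ℂ) ≤ ‖y‖ * ‖P h y‖ := re_inner_le_norm _ _
    nlinarith [norm_nonneg (P h y), norm_nonneg y]
  -- main inequality
  have hbound : ∀ x : H, ‖x‖ ≤ M * ‖A x‖ := by
    intro x
    have hmemIoc : Set.Ioc (0 : ℝ) h₀ ∈ 𝓝[>] (0 : ℝ) := Ioc_mem_nhdsGT_of_mem ⟨le_refl _, hh₀⟩
    have h1 : Tendsto (fun h : ℝ => ‖P h x‖) (𝓝[>] (0 : ℝ)) (𝓝 ‖x‖) :=
      (continuous_norm.tendsto x).comp (hstrong x)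
    -- P h (A (P h x)) → A x
    have h2 : Tendsto (fun h : ℝ => P h (A (P h x))) (𝓝[>] (0 : ℝ)) (𝓝 (A x)) := by
      rw [tendsto_iff_norm_sub_tendsto_zero]
      have hb : ∀ᶠ h in 𝓝[>] (0 : ℝ),
          ‖P h (A (P h x)) - A x‖ ≤ ‖A (P h x) - A x‖ + ‖P h (A x) - A x‖ := by
        filter_upwards [self_mem_nhdsWithin] with h hh
        calc ‖P h (A (P h x)) - A x‖
            = ‖P h (A (P h x) - A x) + (P h (A x) - A x)‖ := by
              rw [map_sub]; congr 1; abel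
          _ ≤ ‖P h (A (P h x) - A x)‖ + ‖P h (A x) - A x‖ := norm_add_le _ _
          _ ≤ ‖A (P h x) - A x‖ + ‖P h (A x) - A x‖ := by
              have := hPle h hh (A (P h x) - A x); linarith
      have t1 : Tendsto (fun h : ℝ => ‖A (P h x) - A x‖) (𝓝[>] (0 : ℝ)) (𝓝 0) := by
        have : Tendsto (fun h : ℝ => A (P h x)) (𝓝[>] (0 : ℝ)) (𝓝 (A x)) :=
          (A.continuous.tendsto _).comp (hstrong x)
        simpa using (tendsto_iff_norm_sub_tendsto_zero.mp this)
      have t2 : Tendsto (fun h : ℝ => ‖P h (A x) - A x‖) (𝓝[>] (0 : ℝ)) (𝓝 0) := by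
        simpa using (tendsto_iff_norm_sub_tendsto_zero.mp (hstrong (A x)))
      have tsum := t1.add t2
      simp only [add_zero] at tsum
      exact tendsto_of_tendsto_of_tendsto_of_le_of_le' tendsto_const_nhds tsum
        (Eventually.of_forall fun h => norm_nonneg _) hb
    have h3 : Tendsto (fun h : ℝ => M * ‖P h (A (P h x))‖) (𝓝[>] (0 : ℝ)) (𝓝 (M * ‖A x‖)) :=
      tendsto_const_nhds.mul ((continuous_norm.tendsto _).comp h2)
    refine le_of_tendsto_of_tendsto h1 h3 ?_
    filter_upwards [hmemIoc] with h hh using hst h hh x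
  have hAadj : adjoint A = A := hA
  constructor
  · intro x
    refine ⟨hbound x, ?_⟩
    rw [hAadj]; exact hbound x
  -- invertibility
  · by_cases hH : Subsingleton H
    · have : Subsingleton (H →L[ℂ] H) := inferInstance
      have : A = 1 := Subsingleton.elim _ _
      rw [this]; exact isUnit_one
    · have : Nontrivial H := not_subsingleton_iff_nontrivial.mp hH
      obtain ⟨x₀, hx₀⟩ := exists_ne (0 : H)
      have hM : 0 < M := by
        have h1 := hbound x₀
        have h2 : 0 < ‖x₀‖ := norm_pos_iff.mpr hx₀
        nlinarith [norm_nonneg (A x₀)]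
      set K : NNReal := ⟨M, hM.le⟩
      have hanti : AntilipschitzWith K A := A.antilipschitz_of_bound (fun x => hbound x)
      have hclosed : IsClosed (Set.range A) := hanti.isClosed_range A.uniformContinuous
      have hker : LinearMap.ker (A : H →ₗ[ℂ] H) = ⊥ := by
        rw [Submodule.eq_bot_iff]
        intro y hy
        have : A y = 0 := hy
        exact hanti.injective (by simpa using this)
      have hrangeclosed : IsClosed ((LinearMap.range (A : H →ₗ[ℂ] H) : Submodule ℂ H) : Set H) := by
        have heq : ((LinearMap.range (A : H →ₗ[ℂ] H) : Submodule ℂ H) : Set H) = Set.range A := by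
          ext y; simp [LinearMap.mem_range]
        rw [heq]; exact hclosed
      have : CompleteSpace (LinearMap.range (A : H →ₗ[ℂ] H)) := hrangeclosed.completeSpace_coe
      have horth : (LinearMap.range (A : H →ₗ[ℂ] H))ᗮ = ⊥ := by
        rw [Submodule.eq_bot_iff]
        intro y hy
        have h5 : ∀ x : H, inner ℂ x (adjoint A y) = (0 : ℂ) := by
          intro x
          rw [ContinuousLinearMap.adjoint_inner_right]
          exact hy (A x) (LinearMap.mem_range_self _ x)
        have h6 : adjoint A y = 0 :=
          inner_self_eq_zero.mp (h5 (adjoint A y))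
        have hAy : A y = 0 := by rw [← hAadj]; exact h6
        have := hbound y
        rw [hAy] at this
        simp only [norm_zero, mul_zero] at this
        exact norm_eq_zero.mp (le_antisymm this (norm_nonneg y))
      have hrange : LinearMap.range (A : H →ₗ[ℂ] H) = ⊤ := Submodule.orthogonal_eq_bot_iff.mp horth
      let e : H ≃L[ℂ] H := ContinuousLinearEquiv.ofBijective A hker hrange
      refine ⟨⟨A, (e.symm : H →L[ℂ] H), ?_, ?_⟩, rfl⟩
      · ext y
        simp only [ContinuousLinearMap.coe_mul, Function.comp_apply, ContinuousLinearMap.one_apply,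
          ContinuousLinearMap.coe_comp']
        exact e.apply_symm_apply y
      · ext y
        simp only [ContinuousLinearMap.coe_mul, Function.comp_apply, ContinuousLinearMap.one_apply,
          ContinuousLinearMap.coe_comp']
        exact e.symm_apply_apply y
end

section
/- Let A be a bounded self-adjoint operator on a Hilbert space H with numerical range in [m, M], m > 0, and (P_h) orthogonal projections converging strongly to the identity. If λ ∈ ℝ is such that there are ε > 0 and h₀ > 0 with dist(λ, σ(A_h)) ≥ ε for all 0 < h ≤ h₀ (A_h the compressions of A), then λ ∉ σ(A). Equivalently, σ(A) ⊆ liminf_{h→0⁺} σ(A_h). -/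
open Filter Topology

/-- A self-adjoint idempotent is a contraction. -/
lemma aux_proj_norm_le {H : Type*} [NormedAddCommGroup H] [InnerProductSpace ℂ H]
    [CompleteSpace H] (Q : H →L[ℂ] H) (hQ : IsIdempotentElem Q)
    (hQa : ContinuousLinearMap.adjoint Q = Q) (y : H) : ‖Q y‖ ≤ ‖y‖ := by
  have hQQ : Q (Q y) = Q y := by
    simpa [ContinuousLinearMap.mul_apply] using congrFun (congrArg DFunLike.coe hQ) y
  have h2 : (inner ℂ (Q y) (Q y) : ℂ) = inner ℂ y (Q y) := by
    nth_rewrite 1 [← hQa]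
    rw [ContinuousLinearMap.adjoint_inner_left, hQQ]
  have h3 : ‖Q y‖ ^ 2 ≤ ‖y‖ * ‖Q y‖ := by
    calc ‖Q y‖ ^ 2 = ‖(inner ℂ (Q y) (Q y) : ℂ)‖ := by
          rw [@inner_self_eq_norm_sq_to_K ℂ]
          simp [norm_pow]
      _ = ‖(inner ℂ y (Q y) : ℂ)‖ := by rw [h2]
      _ ≤ ‖y‖ * ‖Q y‖ := norm_inner_le_norm _ _
  nlinarith [norm_nonneg (Q y), norm_nonneg y]

/-- If a real number `lam` is at distance at least `ε` from the spectrum of a self-adjoint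
operator `B` on a complex Hilbert space, then `‖(lam - B) u‖ ≥ ε ‖u‖`. -/
lemma aux_gap_norm {E : Type*} [NormedAddCommGroup E] [InnerProductSpace ℂ E] [CompleteSpace E]
    (B : E →L[ℂ] E) (hB : IsSelfAdjoint B) (lam ε : ℝ) (hε : 0 < ε)
    (hsep : ∀ z ∈ spectrum ℂ B, ε ≤ dist (lam : ℂ) z) (u : E) :
    ε * ‖u‖ ≤ ‖(lam : ℂ) • u - B u‖ := by
  set T : E →L[ℂ] E := algebraMap ℂ (E →L[ℂ] E) (lam : ℂ) - B with hT
  have hTu : T u = (lam : ℂ) • u - B u := by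
    simp [hT, Algebra.algebraMap_eq_smul_one, ContinuousLinearMap.sub_apply,
      ContinuousLinearMap.smul_apply, ContinuousLinearMap.one_apply]
  have hmem : (lam : ℂ) ∉ spectrum ℂ B := by
    intro hmem
    have := hsep _ hmem
    simp only [dist_self] at this
    linarith
  have hunit : IsUnit T := spectrum.notMem_iff.mp hmem
  set w : (E →L[ℂ] E)ˣ := hunit.unit with hwdef
  have hw : (w : E →L[ℂ] E) = T := hunit.unit_spec
  set R : E →L[ℂ] E := ((w⁻¹ : (E →L[ℂ] E)ˣ) : E →L[ℂ] E) with hRdef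
  have hTsa : IsSelfAdjoint T := by
    refine IsSelfAdjoint.sub ?_ hB
    simp [IsSelfAdjoint, Algebra.algebraMap_eq_smul_one, star_smul, Complex.star_def,
      Complex.conj_ofReal]
  have hRinv : R = Ring.inverse T := by
    rw [← hw, Ring.inverse_unit]
  have hRsa : IsSelfAdjoint R := by
    rw [hRinv]
    calc star (Ring.inverse T) = Ring.inverse (star T) := (Ring.inverse_star T).symm
      _ = Ring.inverse T := by rw [hTsa.star_eq]
  -- spectral bound for R
  have hspec : ∀ z ∈ spectrum ℂ R, ‖z‖ ≤ ε⁻¹ := by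
    intro z hz
    have hz0 : z ≠ 0 := spectrum.ne_zero_of_mem_of_unit hz
    have hinv : z⁻¹ ∈ spectrum ℂ T := by
      have h1 := (spectrum.inv_mem_iff (r := Units.mk0 z hz0) (a := w⁻¹)).mp hz
      rw [inv_inv] at h1
      simpa [hw] using h1
    rw [← spectrum.singleton_sub_eq] at hinv
    obtain ⟨a, ha, b, hb, hab⟩ := Set.mem_sub.mp hinv
    rw [Set.mem_singleton_iff] at ha
    subst ha
    have hd : ε ≤ ‖z⁻¹‖ := by
      rw [← hab, ← dist_eq_norm]
      exact hsep b hb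
    rw [norm_inv] at hd
    have hzpos : 0 < ‖z‖ := norm_pos_iff.mpr hz0
    have := inv_anti₀ hε hd
    rwa [inv_inv] at this
  have hRnorm : ‖R‖ ≤ ε⁻¹ := by
    have h1 : spectralRadius ℂ R ≤ ENNReal.ofReal ε⁻¹ := by
      rw [spectralRadius]
      refine iSup₂_le fun z hz => ?_
      rw [← enorm_eq_nnnorm, ← ofReal_norm]
      exact ENNReal.ofReal_le_ofReal (hspec z hz)
    rw [hRsa.spectralRadius_eq_nnnorm, ← enorm_eq_nnnorm, ← ofReal_norm] at h1
    exact (ENNReal.ofReal_le_ofReal_iff (by positivity)).mp h1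
  have hkey : ‖u‖ ≤ ε⁻¹ * ‖T u‖ := by
    have hu : R (T u) = u := by
      have h1 : R * T = 1 := by rw [hRdef, ← hw]; exact w.inv_mul
      calc R (T u) = (R * T) u := rfl
        _ = u := by rw [h1]; rfl
    calc ‖u‖ = ‖R (T u)‖ := by rw [hu]
      _ ≤ ‖R‖ * ‖T u‖ := R.le_opNorm _
      _ ≤ ε⁻¹ * ‖T u‖ := mul_le_mul_of_nonneg_right hRnorm (norm_nonneg _)
  rw [← hTu]
  calc ε * ‖u‖ ≤ ε * (ε⁻¹ * ‖T u‖) := mul_le_mul_of_nonneg_left hkey hε.le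
    _ = ‖T u‖ := by rw [← mul_assoc, mul_inv_cancel₀ hε.ne', one_mul]

/-- Spectral approximation: if `λ ∈ ℝ` keeps distance `≥ ε` from the spectra of all
compressions `A_h = P_h A P_h |_{range P_h}` for all small `h > 0`, then `λ ∉ σ(A)`;
i.e. `σ(A) ⊆ liminf σ(A_h)`. -/
theorem spectrum_liminf_compressions
    {H : Type*} [NormedAddCommGroup H] [InnerProductSpace ℂ H] [CompleteSpace H]
    (A : H →L[ℂ] H) (hA : IsSelfAdjoint A)
    (m M : ℝ) (hm_pos : 0 < m)
    (hnum : ∀ x : H, m * ‖x‖ ^ 2 ≤ (inner ℂ (A x) x : ℂ).re ∧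
      (inner ℂ (A x) x : ℂ).re ≤ M * ‖x‖ ^ 2)
    (P : ℝ → H →L[ℂ] H)
    (hproj : ∀ h : ℝ, 0 < h → IsIdempotentElem (P h) ∧
      ContinuousLinearMap.adjoint (P h) = P h)
    (hstrong : ∀ x : H, Tendsto (fun h : ℝ => P h x) (𝓝[>] (0 : ℝ)) (𝓝 x))
    (lam : ℝ) (ε h₀ : ℝ) (hε : 0 < ε) (hh₀ : 0 < h₀)
    (hsep : ∀ h ∈ Set.Ioc (0 : ℝ) h₀,
      ∀ z ∈ spectrum ℂ
        (ContinuousLinearMap.codRestrict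
          (((P h).comp A).comp (Submodule.subtypeL (LinearMap.range (P h : H →ₗ[ℂ] H))))
          (LinearMap.range (P h : H →ₗ[ℂ] H))
          (fun x => LinearMap.mem_range.mpr ⟨A x, rfl⟩)),
        ε ≤ dist (lam : ℂ) z) :
    (lam : ℂ) ∉ spectrum ℂ A := by
  set Top : H →L[ℂ] H := algebraMap ℂ (H →L[ℂ] H) (lam : ℂ) - A with hTop
  have hTopx : ∀ x : H, Top x = (lam : ℂ) • x - A x := fun x => by
    simp [hTop, Algebra.algebraMap_eq_smul_one, ContinuousLinearMap.sub_apply,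
      ContinuousLinearMap.smul_apply, ContinuousLinearMap.one_apply]
  -- Step 1: the per-h inequality
  have step : ∀ (x : H) (h : ℝ), h ∈ Set.Ioc (0 : ℝ) h₀ →
      ε * ‖P h x‖ ≤ ‖Top x‖ + ‖Top‖ * ‖P h x - x‖ := by
    intro x h hh
    obtain ⟨hp, hadj⟩ := hproj h hh.1
    have hPP : ∀ y : H, P h (P h y) = P h y := fun y => by
      simpa [ContinuousLinearMap.mul_apply] using congrFun (congrArg DFunLike.coe hp) y
    have hfix : ∀ v : H, v ∈ LinearMap.range (P h : H →ₗ[ℂ] H) → P h v = v := by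
      rintro v ⟨y, rfl⟩
      exact hPP y
    have hcl : IsClosed ((LinearMap.range (P h : H →ₗ[ℂ] H) : Submodule ℂ H) : Set H) := by
      have hset : ((LinearMap.range (P h : H →ₗ[ℂ] H) : Submodule ℂ H) : Set H)
          = {v : H | P h v - v = 0} := by
        ext v
        simp only [SetLike.mem_coe, LinearMap.mem_range, Set.mem_setOf_eq]
        constructor
        · rintro ⟨y, rfl⟩
          simp [hPP y]
        · intro hv
          exact ⟨v, by rw [sub_eq_zero] at hv; exact hv⟩
      rw [hset]
      exact isClosed_eq ((P h).continuous.sub continuous_id) continuous_const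
    haveI : CompleteSpace (LinearMap.range (P h : H →ₗ[ℂ] H)) := hcl.completeSpace_coe
    set Bh := ContinuousLinearMap.codRestrict
      (((P h).comp A).comp (Submodule.subtypeL (LinearMap.range (P h : H →ₗ[ℂ] H))))
      (LinearMap.range (P h : H →ₗ[ℂ] H))
      (fun x => LinearMap.mem_range.mpr ⟨A x, rfl⟩) with hBh
    -- Bh is self-adjoint
    have hBsa : IsSelfAdjoint Bh := by
      rw [ContinuousLinearMap.isSelfAdjoint_iff_isSymmetric]
      intro u v
      show (inner ℂ (Bh u) v : ℂ) = inner ℂ u (Bh v)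
      rw [Submodule.coe_inner, Submodule.coe_inner]
      simp only [hBh, ContinuousLinearMap.coe_codRestrict_apply,
        ContinuousLinearMap.comp_apply, Submodule.subtypeL_apply]
      have hswap : ∀ a b : H, (inner ℂ (P h a) b : ℂ) = inner ℂ a (P h b) := fun a b => by
        conv_lhs => rw [← hadj]
        exact ContinuousLinearMap.adjoint_inner_left _ _ _
      calc (inner ℂ (P h (A ↑u)) ↑v : ℂ) = inner ℂ (A ↑u) (P h ↑v) := hswap _ _
        _ = inner ℂ (A (↑u : H)) ↑v := by rw [hfix _ v.2]
        _ = inner ℂ (↑u : H) (A ↑v) := hA.isSymmetric _ _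
        _ = inner ℂ (P h ↑u) (A ↑v) := by rw [hfix _ u.2]
        _ = inner ℂ (↑u : H) (P h (A ↑v)) := hswap _ _
    -- apply the gap lemma to u := P h x
    set u : LinearMap.range (P h : H →ₗ[ℂ] H) := ⟨P h x, LinearMap.mem_range.mpr ⟨x, rfl⟩⟩ with hu
    have hgap := aux_gap_norm Bh hBsa lam ε hε (hsep h hh) u
    have hnorm1 : ‖u‖ = ‖P h x‖ := rfl
    have hcoe : ((((lam : ℂ) • u - Bh u : LinearMap.range (P h : H →ₗ[ℂ] H))) : H)
        = (lam : ℂ) • P h x - P h (A (P h x)) := by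
      simp [hu, hBh]
    have hnorm2 : ‖(lam : ℂ) • u - Bh u‖ = ‖(lam : ℂ) • P h x - P h (A (P h x))‖ := by
      rw [← Submodule.norm_coe, hcoe]
    have hPsmul : P h ((lam : ℂ) • P h x - A (P h x)) = (lam : ℂ) • P h x - P h (A (P h x)) := by
      rw [map_sub, map_smul, hPP]
    calc ε * ‖P h x‖ = ε * ‖u‖ := by rw [hnorm1]
      _ ≤ ‖(lam : ℂ) • u - Bh u‖ := hgap
      _ = ‖P h ((lam : ℂ) • P h x - A (P h x))‖ := by rw [hnorm2, hPsmul]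
      _ ≤ ‖(lam : ℂ) • P h x - A (P h x)‖ := aux_proj_norm_le (P h) hp hadj _
      _ = ‖Top (P h x)‖ := by rw [hTopx]
      _ = ‖Top x + Top (P h x - x)‖ := by
          have harg : P h x = x + (P h x - x) := by abel
          rw [← map_add, ← harg]
      _ ≤ ‖Top x‖ + ‖Top (P h x - x)‖ := norm_add_le _ _
      _ ≤ ‖Top x‖ + ‖Top‖ * ‖P h x - x‖ := by
          exact add_le_add_right (Top.le_opNorm _) _
  -- Step 2: lower bound for Top by taking h → 0⁺
  have hlow : ∀ x : H, ε * ‖x‖ ≤ ‖Top x‖ := by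
    intro x
    have hmem : Set.Ioc (0 : ℝ) h₀ ∈ 𝓝[>] (0 : ℝ) :=
      Ioc_mem_nhdsGT_of_mem ⟨le_refl 0, hh₀⟩
    have hev : ∀ᶠ h in 𝓝[>] (0 : ℝ),
        ε * ‖P h x‖ ≤ ‖Top x‖ + ‖Top‖ * ‖P h x - x‖ :=
      Filter.eventually_of_mem hmem fun h hh => step x h hh
    have h1 : Tendsto (fun h : ℝ => ε * ‖P h x‖) (𝓝[>] (0 : ℝ)) (𝓝 (ε * ‖x‖)) :=
      ((hstrong x).norm).const_mul ε
    have h2 : Tendsto (fun h : ℝ => ‖Top x‖ + ‖Top‖ * ‖P h x - x‖) (𝓝[>] (0 : ℝ))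
        (𝓝 (‖Top x‖ + ‖Top‖ * 0)) := by
      refine tendsto_const_nhds.add (Tendsto.const_mul _ ?_)
      have h3 : Tendsto (fun h : ℝ => P h x - x) (𝓝[>] (0 : ℝ)) (𝓝 (x - x)) :=
        (hstrong x).sub tendsto_const_nhds
      rw [sub_self] at h3
      simpa using h3.norm
    have := le_of_tendsto_of_tendsto h1 h2 hev
    simpa using this
  -- Step 3: Top is self-adjoint
  have hTsa : IsSelfAdjoint Top := by
    refine IsSelfAdjoint.sub ?_ hA
    simp [IsSelfAdjoint, Algebra.algebraMap_eq_smul_one, star_smul, Complex.star_def,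
      Complex.conj_ofReal]
  -- Step 4: Top is invertible
  rw [spectrum.notMem_iff]
  have hanti : AntilipschitzWith (ε.toNNReal⁻¹) Top := by
    refine ContinuousLinearMap.antilipschitz_of_bound _ fun x => ?_
    have hc : ((ε.toNNReal⁻¹ : NNReal) : ℝ) = ε⁻¹ := by
      rw [NNReal.coe_inv, Real.coe_toNNReal _ hε.le]
    rw [hc]
    have := hlow x
    calc ‖x‖ = ε⁻¹ * (ε * ‖x‖) := by
          rw [← mul_assoc, inv_mul_cancel₀ hε.ne', one_mul]
      _ ≤ ε⁻¹ * ‖Top x‖ := mul_le_mul_of_nonneg_left this (by positivity)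
  have hker : LinearMap.ker (Top : H →ₗ[ℂ] H) = ⊥ := by
    rw [LinearMap.ker_eq_bot]; exact hanti.injective
  have hclosed : IsClosed ((LinearMap.range (Top : H →ₗ[ℂ] H) : Submodule ℂ H) : Set H) := by
    have : ((LinearMap.range (Top : H →ₗ[ℂ] H) : Submodule ℂ H) : Set H) = Set.range Top := by
      ext v; simp [LinearMap.mem_range, Set.mem_range]
    rw [this]
    exact hanti.isClosed_range Top.uniformContinuous
  haveI : CompleteSpace (LinearMap.range (Top : H →ₗ[ℂ] H)) := hclosed.completeSpace_coe
  have hrange : LinearMap.range (Top : H →ₗ[ℂ] H) = ⊤ := by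
    rw [← (LinearMap.range (Top : H →ₗ[ℂ] H)).orthogonal_orthogonal, Submodule.eq_top_iff']
    intro v
    rw [Submodule.mem_orthogonal]
    intro w hw
    have h0 : ∀ y : H, (inner ℂ (Top y) w : ℂ) = 0 := fun y =>
      (Submodule.mem_orthogonal _ w).mp hw _ ⟨y, rfl⟩
    have hTw : Top w = 0 := by
      have h1 : (inner ℂ (Top w) (Top w) : ℂ) = 0 := by
        have h2 := hTsa.isSymmetric (Top w) w
        simp only [ContinuousLinearMap.coe_coe] at h2
        rw [← h2]
        exact h0 (Top w)
      exact inner_self_eq_zero.mp h1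
    have hw0 : w = 0 := by
      have := hlow w
      rw [hTw, norm_zero] at this
      have hn : ‖w‖ ≤ 0 := by
        by_contra hcon
        push_neg at hcon
        nlinarith
      exact norm_le_zero_iff.mp hn
    rw [hw0]
    exact inner_zero_left _
  set e := ContinuousLinearEquiv.ofBijective Top hker hrange with he
  refine ⟨⟨Top, (e.symm : H →L[ℂ] H), ?_, ?_⟩, rfl⟩
  · ext x
    simp only [ContinuousLinearMap.mul_apply, ContinuousLinearMap.one_apply,
      ContinuousLinearMap.coe_coe]
    exact ContinuousLinearEquiv.ofBijective_apply_symm_apply Top hker hrange x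
  · ext x
    simp only [ContinuousLinearMap.mul_apply, ContinuousLinearMap.one_apply,
      ContinuousLinearMap.coe_coe]
    exact ContinuousLinearEquiv.ofBijective_symm_apply_apply Top hker hrange x
end
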